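/- Let B ≥ 2 and let u : ℕ → ℂ be a B-rational (B-regular) sequence, i.e. the ℂ-subspace of the space of sequences ℕ → ℂ spanned by the family {n ↦ u(B^k n + r) : k ∈ ℕ, 0 ≤ r < B^k} is finite-dimensional and nonzero. Then u admits a linear representation insensitive to the leftmost zeroes: there exist d ≥ 1, a row vector L ∈ ℂ^{1×d}, matrices A_0, …, A_{B−1} ∈ Matrix (Fin d) (Fin d) ℂ, and a column vector C ∈ ℂ^d, such that L·A_0 = L and for every n ∈ ℕ and every word n_{K−1} … n_1 n_0 over {0,…,B−1} with n = Σ_{i=0}^{K−1} n_i B^i (leading zeros allowed), one has u(n) = L · A_{n_{K−1}} ⋯ A_{n_1} A_{n_0} · C; in particular u(0) = L·C and the value is independent of the number of leading zeros. -/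

import Mathlib

open scoped Classical BigOperators

noncomputable section

/-- every nonzero `B`-rational (B-regular) sequence admits a linear
representation insensitive to the leftmost zeroes: `L A_0 = L` and, for every way of
writing `n` with digits `n_{K-1} … n_0` (leading zeros allowed),
`u(n) = L A_{n_{K-1}} ⋯ A_{n_0} C`. -/
theorem radixRational_insensitive_representation (B : ℕ) (hB : 2 ≤ B) (u : ℕ → ℂ)
    (hfd : FiniteDimensional ℂ (Submodule.span ℂ
      {v : ℕ → ℂ | ∃ k r : ℕ, r < B ^ k ∧ v = fun n => u (B ^ k * n + r)}))
    (hne : Submodule.span ℂ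
      {v : ℕ → ℂ | ∃ k r : ℕ, r < B ^ k ∧ v = fun n => u (B ^ k * n + r)} ≠ ⊥) :
    ∃ (d : ℕ) (_ : 1 ≤ d) (L : Fin d → ℂ) (A : Fin B → Matrix (Fin d) (Fin d) ℂ)
      (C : Fin d → ℂ),
      Matrix.vecMul L (A ⟨0, by omega⟩) = L ∧
      (∀ (K : ℕ) (w : Fin K → Fin B) (n : ℕ),
        n = ∑ i : Fin K, (w i : ℕ) * B ^ (i : ℕ) →
        u n = dotProduct L
          ((((List.ofFn w).map A).reverse.prod).mulVec C)) ∧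
      u 0 = dotProduct L C := by
  classical
  set V : Submodule ℂ (ℕ → ℂ) := Submodule.span ℂ
      {v : ℕ → ℂ | ∃ k r : ℕ, r < B ^ k ∧ v = fun n => u (B ^ k * n + r)} with hV
  haveI : FiniteDimensional ℂ V := hfd
  haveI : Nontrivial V := Submodule.nontrivial_iff_ne_bot.mpr hne
  have huV : u ∈ V := Submodule.subset_span ⟨0, 0, by norm_num, by funext n; simp⟩
  -- the shift maps
  set σ : Fin B → ((ℕ → ℂ) →ₗ[ℂ] (ℕ → ℂ)) :=
    fun j => LinearMap.funLeft ℂ ℂ (fun n => B * n + (j : ℕ)) with hσdef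
  have hσ : ∀ j : Fin B, ∀ v ∈ V, σ j v ∈ V := by
    intro j v hv
    have h1 : V ≤ V.comap (σ j) := by
      rw [hV]
      refine Submodule.span_le.mpr ?_
      rintro v ⟨k, r, hr, rfl⟩
      refine Submodule.subset_span ⟨k + 1, (j : ℕ) * B ^ k + r, ?_, ?_⟩
      · have hj : (j : ℕ) + 1 ≤ B := j.2
        calc (j : ℕ) * B ^ k + r < (j : ℕ) * B ^ k + B ^ k := by omega
          _ = ((j : ℕ) + 1) * B ^ k := by ring
          _ ≤ B * B ^ k := Nat.mul_le_mul_right _ hj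
          _ = B ^ (k + 1) := by ring
      · funext n
        simp only [hσdef, LinearMap.funLeft_apply, Function.comp]
        congr 1
        ring
    exact h1 hv
  set T : Fin B → (V →ₗ[ℂ] V) := fun j => (σ j).restrict (hσ j) with hTdef
  have hT : ∀ (j : Fin B) (v : V) (n : ℕ),
      ((T j v : ℕ → ℂ)) n = (v : ℕ → ℂ) (B * n + (j : ℕ)) := fun j v n => rfl
  set d : ℕ := Module.finrank ℂ V with hd
  have hd1 : 1 ≤ d := Module.finrank_pos
  set b : Module.Basis (Fin d) ℂ V := Module.finBasis ℂ V with hb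
  set L : Fin d → ℂ := fun i => ((b i : ℕ → ℂ)) 0 with hL
  set C : Fin d → ℂ := ⇑(b.repr ⟨u, huV⟩) with hC
  -- evaluation at 0 via L
  have heval : ∀ v : V, (v : ℕ → ℂ) 0 = dotProduct L ⇑(b.repr v) := by
    intro v
    conv_lhs => rw [← b.sum_repr v]
    simp [dotProduct, hL, Finset.sum_apply, mul_comm, -Module.Basis.sum_repr]
  -- main induction
  have hmain : ∀ (K : ℕ) (w : Fin K → Fin B) (v : V) (n : ℕ),
      n = ∑ i : Fin K, (w i : ℕ) * B ^ (i : ℕ) →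
      (v : ℕ → ℂ) n = dotProduct L
        ((((List.ofFn w).map (fun j => LinearMap.toMatrix b b (T j))).reverse.prod).mulVec
          ⇑(b.repr v)) := by
    intro K
    induction K with
    | zero =>
      intro w v n hn
      simp only [Finset.univ_eq_empty, Finset.sum_empty] at hn
      subst hn
      simpa using heval v
    | succ K ih =>
      intro w v n hn
      set m : ℕ := ∑ i : Fin K, (w i.succ : ℕ) * B ^ (i : ℕ) with hm
      have hn' : n = B * m + (w 0 : ℕ) := by
        rw [hn, Fin.sum_univ_succ, hm, Finset.mul_sum]
        simp only [Fin.val_zero, pow_zero, mul_one, Fin.val_succ, pow_succ]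
        rw [add_comm]
        congr 1
        exact Finset.sum_congr rfl fun i _ => by ring
      have key := ih (fun i => w i.succ) (T (w 0) v) m rfl
      have hstep : (v : ℕ → ℂ) n = ((T (w 0) v : ℕ → ℂ)) m := by rw [hn']; rfl
      rw [hstep, key, ← LinearMap.toMatrix_mulVec_repr b b (T (w 0)) v,
        Matrix.mulVec_mulVec]
      congr 2
      rw [List.ofFn_succ]
      simp
  refine ⟨d, hd1, L, fun j => LinearMap.toMatrix b b (T j), C, ?_, ?_, ?_⟩
  · funext j
    have e1 : Matrix.vecMul L (LinearMap.toMatrix b b (T ⟨0, by omega⟩)) j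
        = dotProduct L ⇑(b.repr (T ⟨0, by omega⟩ (b j))) := by
      simp [Matrix.vecMul, dotProduct, LinearMap.toMatrix_apply]
    rw [e1, ← heval]
    have : ((T ⟨0, by omega⟩ (b j) : ℕ → ℂ)) 0 = (b j : ℕ → ℂ) 0 := by
      rw [hT]
      norm_num
    exact this
  · intro K w n hn
    exact hmain K w ⟨u, huV⟩ n hn
  · exact heval ⟨u, huV⟩
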